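/- Let G be an amply regular graph with parameters (n, d, α, β) with girth 4 (so α = 0 and β ≥ 1). Then for every edge xy, the Lin-Lu-Yau curvature satisfies κ(x, y) = 2/d. -/

import Mathlib

open Finset SimpleGraph

variable {V : Type*} [Fintype V] [DecidableEq V]

/-- A graph is amply regular with parameters `(n, d, a, b)` if it is `d`-regular on `n`
vertices, adjacent vertices have exactly `a` common neighbors, and vertices at distance 2
have exactly `b` common neighbors. -/
def SimpleGraph.IsAmplyRegular (G : SimpleGraph V) [DecidableRel G.Adj]
    (n d a b : ℕ) : Prop :=
  Fintype.card V = n ∧ G.IsRegularOfDegree d ∧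
    (∀ x y, G.Adj x y → (G.neighborFinset x ∩ G.neighborFinset y).card = a) ∧
    (∀ x y, G.dist x y = 2 → (G.neighborFinset x ∩ G.neighborFinset y).card = b)

/-- The measure `μ_x^p` giving mass `p` to `x` and `(1-p)/deg x` to each neighbor of `x`. -/
noncomputable def muMeasure (G : SimpleGraph V) [DecidableRel G.Adj] (p : ℝ) (x : V) :
    V → ℝ :=
  fun v => if v = x then p else if G.Adj x v then (1 - p) / (G.degree x : ℝ) else 0

/-- `pi` is a transport plan between `mu1` and `mu2`. -/
def IsTransportPlan (mu1 mu2 : V → ℝ) (pi : V → V → ℝ) : Prop :=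
  (∀ u v, 0 ≤ pi u v) ∧ (∀ u, ∑ v, pi u v = mu1 u) ∧ (∀ v, ∑ u, pi u v = mu2 v)

/-- The 1-Wasserstein distance between two measures w.r.t. the graph distance. -/
noncomputable def W1 (G : SimpleGraph V) (mu1 mu2 : V → ℝ) : ℝ :=
  sInf {c : ℝ | ∃ pi, IsTransportPlan mu1 mu2 pi ∧
    c = ∑ u, ∑ v, (G.dist u v : ℝ) * pi u v}

/-- The Lin-Lu-Yau curvature of an edge of a `d`-regular graph, via the idleness
`p = 1/(d+1)` formula of Bourne et al. -/
noncomputable def kappaLLY (G : SimpleGraph V) [DecidableRel G.Adj] (d : ℕ) (x y : V) :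
    ℝ :=
  ((d + 1 : ℝ) / d) *
    (1 - W1 G (muMeasure G (1 / (d + 1 : ℝ)) x) (muMeasure G (1 / (d + 1 : ℝ)) y))

/-- `N_x = Γ(x) \ ({y} ∪ Γ(y))`. -/
def Nset (G : SimpleGraph V) [DecidableRel G.Adj] (x y : V) : Finset V :=
  G.neighborFinset x \ insert y (G.neighborFinset y)

/-- `Δ_{xy} = Γ(x) ∩ Γ(y)`. -/
def Dset (G : SimpleGraph V) [DecidableRel G.Adj] (x y : V) : Finset V :=
  G.neighborFinset x ∩ G.neighborFinset y

section Helpers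

variable {G : SimpleGraph V}

omit [Fintype V] [DecidableEq V] in
lemma egirth4 (hg : G.girth = 4) : G.egirth = 4 := by
  have hne : G.egirth ≠ ⊤ := fun ht => by simp [girth, ht] at hg
  rw [← ENat.coe_toNat hne]; exact_mod_cast congrArg (Nat.cast : ℕ → ℕ∞) hg

omit [Fintype V] [DecidableEq V] in
lemma triLemma (hg : G.girth = 4) {x y u : V} (hxy : G.Adj x y) (hxu : G.Adj x u)
    (hyu : G.Adj y u) : False := by
  have hc : (Walk.cons hxy (Walk.cons hyu (Walk.cons hxu.symm Walk.nil))).IsCycle := by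
    simp [Walk.isCycle_def, Walk.isTrail_def, hxy.ne, hxu.ne, hyu.ne, hxy.ne', hxu.ne', hyu.ne',
      Sym2.eq, Sym2.rel_iff]
  have h4 : (4 : ℕ∞) ≤ G.egirth := (egirth4 hg).ge
  have := le_egirth.mp h4 x _ hc
  norm_num at this

omit [Fintype V] [DecidableEq V] in
lemma cycle4 {a : V} (w : G.Walk a a) (hc : w.IsCycle) (hl : w.length = 4) :
    ∃ p q r, G.Adj a p ∧ G.Adj p q ∧ G.Adj q r ∧ G.Adj r a ∧ a ≠ q ∧ p ≠ r := by
  cases w with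
  | nil => simp at hl
  | cons h1 w1 =>
    cases w1 with
    | nil => simp at hl
    | cons h2 w2 =>
      cases w2 with
      | nil => simp at hl
      | cons h3 w3 =>
        cases w3 with
        | nil => simp at hl
        | cons h4 w4 =>
          cases w4 with
          | cons h5 w5 => simp [Walk.length_cons] at hl
          | nil =>
            have hnd := hc.support_nodup
            simp [Walk.support_cons, List.nodup_cons] at hnd
            exact ⟨_, _, _, h1, h2, h3, h4, by tauto, by tauto⟩

omit [Fintype V] [DecidableEq V] in
lemma dist2 {u w v : V} (h1 : G.Adj u w) (h2 : G.Adj w v) (h3 : ¬ G.Adj u v)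
    (h4 : u ≠ v) : G.dist u v = 2 := by
  have hle : G.dist u v ≤ 2 := by
    have := G.dist_le (Walk.cons h1 (Walk.cons h2 Walk.nil))
    simpa using this
  have hr : G.Reachable u v := (Walk.cons h1 (Walk.cons h2 Walk.nil)).reachable
  have h0 : 0 < G.dist u v := hr.pos_dist_of_ne h4
  have h1' : G.dist u v ≠ 1 := fun h => h3 (dist_eq_one_iff_adj.mp h)
  omega

variable [DecidableRel G.Adj]

lemma bge2 (hg : G.girth = 4) {b : ℕ}
    (hβ : ∀ x y, G.dist x y = 2 → (G.neighborFinset x ∩ G.neighborFinset y).card = b) :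
    2 ≤ b := by
  have hnacyc : ¬ G.IsAcyclic := by
    intro hA; rw [hA.girth_eq_zero] at hg; simp at hg
  obtain ⟨a0, w, hwc, hwl⟩ := exists_girth_eq_length.mpr hnacyc
  rw [hg] at hwl
  obtain ⟨p0, q0, r0, h1, h2, h3, h4, hne, hne2⟩ := cycle4 w hwc hwl.symm
  have hnadj : ¬ G.Adj a0 q0 := fun hadj => triLemma hg hadj h1 h2.symm
  have hd : G.dist a0 q0 = 2 := dist2 h1 h2 hnadj hne
  have hsub : ({p0, r0} : Finset V) ⊆ G.neighborFinset a0 ∩ G.neighborFinset q0 := by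
    intro v hv
    simp only [mem_insert, mem_singleton] at hv
    rcases hv with rfl | rfl <;> simp [mem_inter, mem_neighborFinset]
    · exact ⟨h1, h2.symm⟩
    · exact ⟨h4.symm, h3⟩
  have := Finset.card_le_card hsub
  rwa [hβ a0 q0 hd, Finset.card_insert_of_notMem (by simpa using hne2),
    Finset.card_singleton] at this

lemma mem_Nset {x y u : V} : u ∈ Nset G x y ↔ G.Adj x u ∧ u ≠ y ∧ ¬ G.Adj y u := by
  simp only [Nset, mem_sdiff, mem_insert, mem_neighborFinset, not_or]

lemma Nset_eq_erase (tri : ∀ {u v w : V}, G.Adj u v → G.Adj u w → G.Adj v w → False)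
    {x y : V} (hxy : G.Adj x y) : Nset G x y = (G.neighborFinset x).erase y := by
  ext u
  simp only [mem_Nset, mem_erase, mem_neighborFinset]
  constructor
  · rintro ⟨h1, h2, h3⟩; exact ⟨h2, h1⟩
  · rintro ⟨h2, h1⟩; exact ⟨h1, h2, fun h3 => tri hxy h1 h3⟩

lemma card_Nset {d : ℕ} (hreg : G.IsRegularOfDegree d)
    (tri : ∀ {u v w : V}, G.Adj u v → G.Adj u w → G.Adj v w → False)
    {x y : V} (hxy : G.Adj x y) : (Nset G x y).card = d - 1 := by
  rw [Nset_eq_erase tri hxy, card_erase_of_mem (by simpa [mem_neighborFinset] using hxy),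
    card_neighborFinset_eq_degree, hreg x]

lemma count_Nset {b : ℕ}
    (tri : ∀ {u v w : V}, G.Adj u v → G.Adj u w → G.Adj v w → False)
    (hβ : ∀ x y, G.dist x y = 2 → (G.neighborFinset x ∩ G.neighborFinset y).card = b)
    {x y : V} (hxy : G.Adj x y) {u : V} (hu : u ∈ Nset G x y) :
    (Nset G y x ∩ G.neighborFinset u).card = b - 1 := by
  obtain ⟨h1, h2, h3⟩ := mem_Nset.mp hu
  have hd : G.dist u y = 2 := dist2 h1.symm hxy (fun h => h3 h.symm) h2
  have hset : Nset G y x ∩ G.neighborFinset u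
      = (G.neighborFinset u ∩ G.neighborFinset y).erase x := by
    ext v
    simp only [mem_inter, mem_Nset, mem_erase, mem_neighborFinset]
    constructor
    · rintro ⟨⟨a1, a2, a3⟩, a4⟩; exact ⟨a2, a4, a1⟩
    · rintro ⟨a2, a4, a1⟩
      exact ⟨⟨a1, a2, fun hvx => tri hxy hvx a1⟩, a4⟩
  rw [hset, card_erase_of_mem
      (by simp only [mem_inter, mem_neighborFinset]; exact ⟨h1.symm, hxy.symm⟩),
    hβ u y hd]

end Helpers


/-- In an amply regular graph with girth `4`, every edge has Lin-Lu-Yau curvature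
`2/d`. -/
theorem stmt6 (G : SimpleGraph V) [DecidableRel G.Adj] {n d a b : ℕ}
    (h : G.IsAmplyRegular n d a b) (hg : G.girth = 4)
    (x y : V) (hxy : G.Adj x y) :
    kappaLLY G d x y = 2 / d := by
  obtain ⟨hn, hreg, hα, hβ⟩ := h
  have tri : ∀ {u v w : V}, G.Adj u v → G.Adj u w → G.Adj v w → False :=
    fun h1 h2 h3 => triLemma hg h1 h2 h3
  have hb : 2 ≤ b := bge2 hg hβ
  have hd : 1 ≤ d := by
    have h1 : 0 < (G.neighborFinset x).card :=
      Finset.card_pos.mpr ⟨y, by simpa [mem_neighborFinset] using hxy⟩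
    rw [card_neighborFinset_eq_degree, hreg x] at h1
    omega
  -- real number facts
  have hd0 : (0:ℝ) < d := by exact_mod_cast Nat.lt_of_lt_of_le Nat.zero_lt_one hd
  have hd1 : (0:ℝ) < (d:ℝ) + 1 := by linarith
  have hb2 : (2:ℝ) ≤ (b:ℝ) := by exact_mod_cast hb
  have hb1 : (0:ℝ) < (b:ℝ) - 1 := by linarith
  set p : ℝ := 1 / ((d:ℝ) + 1) with hp
  have hp0 : 0 < p := by positivity
  set q : ℝ := p / ((b:ℝ) - 1) with hq
  have hq0 : 0 ≤ q := by positivity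
  -- mu description
  have hmu : ∀ z u : V, muMeasure G p z u = if u = z ∨ G.Adj z u then p else 0 := by
    intro z u
    unfold muMeasure
    by_cases h1 : u = z
    · simp [h1]
    · by_cases h2 : G.Adj z u
      · simp only [h1, h2, if_true, if_false, or_true]
        rw [hreg z, hp]
        field_simp
        ring
      · simp [h1, h2]
  have hsum_mu : ∀ z : V, ∑ u, muMeasure G p z u = 1 := by
    intro z
    have : ∀ u : V, muMeasure G p z u = if u ∈ insert z (G.neighborFinset z) then p else 0 := by
      intro u; rw [hmu z u]
      congr 1
      simp [mem_insert, mem_neighborFinset]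
    rw [Finset.sum_congr rfl fun u _ => this u, Finset.sum_ite_mem, Finset.univ_inter,
      Finset.sum_const, Finset.card_insert_of_notMem (by simp), card_neighborFinset_eq_degree,
      hreg z, nsmul_eq_mul, hp]
    push_cast
    field_simp
  set Nx := Nset G x y with hNx
  set Ny := Nset G y x with hNy
  have hNx_card : Nx.card = d - 1 := card_Nset hreg tri hxy
  have hcount : ∀ u ∈ Nx, (Ny ∩ G.neighborFinset u).card = b - 1 :=
    fun u hu => count_Nset tri hβ hxy hu
  have hcount' : ∀ v ∈ Ny, (Nx ∩ G.neighborFinset v).card = b - 1 :=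
    fun v hv => count_Nset tri hβ hxy.symm hv
  have hxNx : x ∉ Nx := fun hh => G.loopless.irrefl x (mem_Nset.mp hh).1
  have hyNx : y ∉ Nx := fun hh => (mem_Nset.mp hh).2.1 rfl
  have hxNy : x ∉ Ny := fun hh => (mem_Nset.mp hh).2.1 rfl
  have hyNy : y ∉ Ny := fun hh => G.loopless.irrefl y (mem_Nset.mp hh).1
  have hne : x ≠ y := hxy.ne
  have hbcast : ((b - 1 : ℕ) : ℝ) = (b:ℝ) - 1 := by
    rw [Nat.cast_sub (by omega)]; norm_num
  have hcardq : ((b:ℝ) - 1) * q = p := by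
    rw [hq]; field_simp
  -- the transport plan
  set pl : V → V → ℝ := fun u v =>
    if u = x ∧ v = x then p else if u = y ∧ v = y then p
    else if u ∈ Nx ∧ v ∈ Ny ∧ G.Adj u v then q else 0 with hpl
  -- row descriptions
  have plx : ∀ v, pl x v = if v = x then p else 0 := by
    intro v
    by_cases hv : v = x
    · simp [hpl, hv]
    · simp [hpl, hv, hne, hxNx]
  have ply : ∀ v, pl y v = if v = y then p else 0 := by
    intro v
    by_cases hv : v = y
    · simp [hpl, hv, hne.symm]
    · simp [hpl, hv, hne.symm, hyNx]
  have plu : ∀ u ∈ Nx, ∀ v, pl u v = if v ∈ Ny ∩ G.neighborFinset u then q else 0 := by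
    intro u hu v
    have hux : u ≠ x := fun e => hxNx (e ▸ hu)
    have huy : u ≠ y := fun e => hyNx (e ▸ hu)
    by_cases hv : v ∈ Ny ∩ G.neighborFinset u
    · obtain ⟨hv1, hv2⟩ := Finset.mem_inter.mp hv
      rw [mem_neighborFinset] at hv2
      simp [hpl, hux, huy, hu, hv1, hv2, Finset.mem_inter.mp hv]
    · rw [Finset.mem_inter, not_and_or] at hv
      rcases hv with hv | hv
      · simp [hpl, hux, huy, hv]
      · rw [mem_neighborFinset] at hv
        simp [hpl, hux, huy, hv]
  have plo : ∀ u, u ≠ x → u ≠ y → u ∉ Nx → ∀ v, pl u v = 0 := by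
    intro u h1 h2 h3 v
    simp [hpl, h1, h2, h3]
  -- column descriptions
  have plcx : ∀ u, pl u x = if u = x then p else 0 := by
    intro u
    by_cases hu : u = x
    · simp [hpl, hu]
    · simp [hpl, hu, hne, hne.symm, hxNy]
  have plcy : ∀ u, pl u y = if u = y then p else 0 := by
    intro u
    by_cases hu : u = y
    · simp [hpl, hu, hne, hne.symm, hyNy]
    · simp [hpl, hu, hne, hne.symm, hyNy]
  have plcv : ∀ v ∈ Ny, ∀ u, pl u v = if u ∈ Nx ∩ G.neighborFinset v then q else 0 := by
    intro v hv u
    have hvx : v ≠ x := fun e => hxNy (e ▸ hv)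
    have hvy : v ≠ y := fun e => hyNy (e ▸ hv)
    by_cases hu : u ∈ Nx ∩ G.neighborFinset v
    · obtain ⟨hu1, hu2⟩ := Finset.mem_inter.mp hu
      rw [mem_neighborFinset] at hu2
      simp [hpl, hvx, hvy, hu1, hv, hu2, hu2.symm]
    · rw [Finset.mem_inter, not_and_or] at hu
      rcases hu with hu | hu
      · simp [hpl, hvx, hvy, hu]
      · rw [mem_neighborFinset] at hu
        have huv : ¬ G.Adj u v := fun hh => hu hh.symm
        simp [hpl, hvx, hvy, hu, huv]
  have hplan : IsTransportPlan (muMeasure G p x) (muMeasure G p y) pl := by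
    refine ⟨?_, ?_, ?_⟩
    · intro u v
      simp only [hpl]
      split_ifs <;> first | exact le_of_lt hp0 | exact hq0 | exact le_rfl
    · intro u
      rw [hmu x u]
      by_cases h1 : u = x
      · rw [h1, Finset.sum_congr rfl fun v _ => plx v,
          Finset.sum_ite_eq' Finset.univ x fun _ => p]
        simp
      · by_cases h2 : u = y
        · rw [h2, Finset.sum_congr rfl fun v _ => ply v,
            Finset.sum_ite_eq' Finset.univ y fun _ => p]
          simp [hxy]
        · by_cases h3 : u ∈ Nx
          · rw [Finset.sum_congr rfl fun v _ => plu u h3 v, Finset.sum_ite_mem,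
              Finset.univ_inter, Finset.sum_const, hcount u h3, nsmul_eq_mul, hbcast, hcardq]
            have : G.Adj x u := (mem_Nset.mp h3).1
            simp [this]
          · rw [Finset.sum_congr rfl fun v _ => plo u h1 h2 h3 v]
            have : ¬ G.Adj x u := by
              intro hadj
              apply h3
              rw [mem_Nset]
              refine ⟨hadj, h2, fun hadj2 => tri hxy hadj hadj2⟩
            simp [h1, this]
    · intro v
      rw [hmu y v]
      by_cases h1 : v = x
      · rw [h1, Finset.sum_congr rfl fun u _ => plcx u,
          Finset.sum_ite_eq' Finset.univ x fun _ => p]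
        simp [hxy.symm]
      · by_cases h2 : v = y
        · rw [h2, Finset.sum_congr rfl fun u _ => plcy u,
            Finset.sum_ite_eq' Finset.univ y fun _ => p]
          simp
        · by_cases h3 : v ∈ Ny
          · rw [Finset.sum_congr rfl fun u _ => plcv v h3 u, Finset.sum_ite_mem,
              Finset.univ_inter, Finset.sum_const, hcount' v h3, nsmul_eq_mul, hbcast, hcardq]
            have : G.Adj y v := (mem_Nset.mp h3).1
            simp [this]
          · have hz : ∀ u, pl u v = 0 := by
              intro u
              have hnv : ¬ (u ∈ Nx ∧ v ∈ Ny ∧ G.Adj u v) := fun ⟨_, hh, _⟩ => h3 hh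
              simp [hpl, h1, h2, hnv]
            rw [Finset.sum_congr rfl fun u _ => hz u]
            have : ¬ G.Adj y v := by
              intro hadj
              apply h3
              rw [mem_Nset]
              exact ⟨hadj, h1, fun hadj2 => tri hxy.symm hadj hadj2⟩
            simp [h2, this]
  -- cost of the plan
  have hcost : ∑ u, ∑ v, (G.dist u v : ℝ) * pl u v = ((d:ℝ) - 1) * p := by
    have hinner : ∀ u, ∑ v, (G.dist u v : ℝ) * pl u v = if u ∈ Nx then p else 0 := by
      intro u
      by_cases h1 : u = x
      · rw [h1, if_neg hxNx]
        apply Finset.sum_eq_zero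
        intro v _
        by_cases hv : v = x
        · rw [hv]; simp
        · rw [plx v, if_neg hv, mul_zero]
      · by_cases h2 : u = y
        · rw [h2, if_neg hyNx]
          apply Finset.sum_eq_zero
          intro v _
          by_cases hv : v = y
          · rw [hv]; simp
          · rw [ply v, if_neg hv, mul_zero]
        · by_cases h3 : u ∈ Nx
          · rw [if_pos h3]
            have : ∀ v, (G.dist u v : ℝ) * pl u v
                = if v ∈ Ny ∩ G.neighborFinset u then q else 0 := by
              intro v
              by_cases hv : v ∈ Ny ∩ G.neighborFinset u
              · have hadj : G.Adj u v := by
                  have := (Finset.mem_inter.mp hv).2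
                  rwa [mem_neighborFinset] at this
                rw [plu u h3 v, if_pos hv, dist_eq_one_iff_adj.mpr hadj]
                norm_num
              · rw [plu u h3 v, if_neg hv, mul_zero]
            rw [Finset.sum_congr rfl fun v _ => this v, Finset.sum_ite_mem,
              Finset.univ_inter, Finset.sum_const, hcount u h3, nsmul_eq_mul, hbcast, hcardq]
          · rw [if_neg h3]
            apply Finset.sum_eq_zero
            intro v _
            rw [plo u h1 h2 h3 v, mul_zero]
    rw [Finset.sum_congr rfl fun u _ => hinner u, Finset.sum_ite_mem, Finset.univ_inter,
      Finset.sum_const, hNx_card, nsmul_eq_mul, Nat.cast_sub hd]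
    norm_num
  -- lower bound for all transport plans
  have hlow : ∀ c ∈ {c : ℝ | ∃ pi, IsTransportPlan (muMeasure G p x) (muMeasure G p y) pi ∧
      c = ∑ u, ∑ v, (G.dist u v : ℝ) * pi u v}, ((d:ℝ) - 1) / ((d:ℝ) + 1) ≤ c := by
    rintro c ⟨pi, ⟨hpos, hrow, hcol⟩, rfl⟩
    have hmargx : ∀ u v, pi u v ≤ muMeasure G p x u := by
      intro u v
      rw [← hrow u]
      exact Finset.single_le_sum (fun i _ => hpos u i) (Finset.mem_univ v)
    have hmargy : ∀ u v, pi u v ≤ muMeasure G p y v := by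
      intro u v
      rw [← hcol v]
      exact Finset.single_le_sum (fun i _ => hpos i v) (Finset.mem_univ u)
    have htot : ∑ u, ∑ v, pi u v = 1 := by
      rw [Finset.sum_congr rfl fun u _ => hrow u, hsum_mu x]
    have hdiag : ∑ u, pi u u ≤ 2 * p := by
      have hterm : ∀ u : V, pi u u ≤ if u ∈ ({x, y} : Finset V) then p else 0 := by
        intro u
        by_cases h1 : u = x
        · rw [h1, if_pos (by simp)]
          have := hmargx x x
          rwa [hmu x x, if_pos (Or.inl rfl)] at this
        · by_cases h2 : u = y
          · rw [h2, if_pos (by simp)]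
            have := hmargy y y
            rwa [hmu y y, if_pos (Or.inl rfl)] at this
          · simp only [Finset.mem_insert, Finset.mem_singleton, h1, h2, or_self, if_neg,
              not_false_iff]
            by_cases h3 : G.Adj x u
            · have h4 : ¬ G.Adj y u := fun hadj => tri hxy h3 hadj
              have := hmargy u u
              rwa [hmu y u, if_neg (by push_neg; exact ⟨h2, h4⟩)] at this
            · have := hmargx u u
              rwa [hmu x u, if_neg (by push_neg; exact ⟨h1, h3⟩)] at this
      calc ∑ u, pi u u ≤ ∑ u, (if u ∈ ({x, y} : Finset V) then p else 0) :=
            Finset.sum_le_sum fun u _ => hterm u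
        _ = 2 * p := by
            rw [Finset.sum_ite_mem, Finset.univ_inter, Finset.sum_const,
              Finset.card_insert_of_notMem (by simpa using hne), Finset.card_singleton,
              nsmul_eq_mul]
            norm_num
    have hterm2 : ∀ u v : V, pi u v - (if u = v then pi u v else 0)
        ≤ (G.dist u v : ℝ) * pi u v := by
      intro u v
      by_cases huv : u = v
      · rw [if_pos huv]
        have : (0:ℝ) ≤ (G.dist u v : ℝ) * pi u v := mul_nonneg (Nat.cast_nonneg _) (hpos u v)
        linarith
      · rw [if_neg huv, sub_zero]
        rcases eq_or_lt_of_le (hpos u v) with h0 | h0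
        · rw [← h0, mul_zero]
        · have hu : u = x ∨ G.Adj x u := by
            by_contra hC
            push_neg at hC
            have hz : muMeasure G p x u = 0 := by
              rw [hmu x u, if_neg (by push_neg; exact hC)]
            have := hmargx u v
            rw [hz] at this
            linarith
          have hv : v = y ∨ G.Adj y v := by
            by_contra hC
            push_neg at hC
            have hz : muMeasure G p y v = 0 := by
              rw [hmu y v, if_neg (by push_neg; exact hC)]
            have := hmargy u v
            rw [hz] at this
            linarith
          have hr : G.Reachable u v := by
            have r1 : G.Reachable u x := by
              rcases hu with rfl | hadj
              · exact Reachable.refl u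
              · exact hadj.symm.reachable
            have r3 : G.Reachable y v := by
              rcases hv with rfl | hadj
              · exact Reachable.refl v
              · exact hadj.reachable
            exact r1.trans (hxy.reachable.trans r3)
          have hdpos : 0 < G.dist u v := hr.pos_dist_of_ne huv
          have hd1' : (1:ℝ) ≤ (G.dist u v : ℝ) := by exact_mod_cast hdpos
          exact le_mul_of_one_le_left (le_of_lt h0) hd1'
    have key : 1 - 2 * p ≤ ∑ u, ∑ v, (G.dist u v : ℝ) * pi u v := by
      have step1 : ∀ u : V, ∑ v, pi u v - pi u u
          ≤ ∑ v, (G.dist u v : ℝ) * pi u v := by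
        intro u
        have : pi u u = ∑ v, (if u = v then pi u v else 0) := by
          rw [Finset.sum_ite_eq Finset.univ u fun v => pi u v]
          simp
        rw [this, ← Finset.sum_sub_distrib]
        exact Finset.sum_le_sum fun v _ => hterm2 u v
      calc 1 - 2 * p ≤ 1 - ∑ u, pi u u := by linarith
        _ = ∑ u, (∑ v, pi u v - pi u u) := by
            rw [Finset.sum_sub_distrib, htot]
        _ ≤ ∑ u, ∑ v, (G.dist u v : ℝ) * pi u v := Finset.sum_le_sum fun u _ => step1 u
    have heq : 1 - 2 * p = ((d:ℝ) - 1) / ((d:ℝ) + 1) := by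
      rw [hp]
      field_simp
      ring
    linarith [key, heq.symm.le]
  -- W1 value
  have hmemS : ((d:ℝ) - 1) / ((d:ℝ) + 1) ∈ {c : ℝ |
      ∃ pi, IsTransportPlan (muMeasure G p x) (muMeasure G p y) pi ∧
      c = ∑ u, ∑ v, (G.dist u v : ℝ) * pi u v} := by
    refine ⟨pl, hplan, ?_⟩
    rw [hcost, hp, mul_one_div]
  have hW : W1 G (muMeasure G p x) (muMeasure G p y) = ((d:ℝ) - 1) / ((d:ℝ) + 1) := by
    unfold W1
    exact le_antisymm (csInf_le ⟨_, hlow⟩ hmemS) (le_csInf ⟨_, hmemS⟩ hlow)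
  unfold kappaLLY
  rw [show (1 : ℝ) / ((d:ℝ) + 1) = p from rfl] at *
  rw [hW]
  have hdne : (d:ℝ) ≠ 0 := ne_of_gt hd0
  have hd1ne : (d:ℝ) + 1 ≠ 0 := ne_of_gt hd1
  field_simp
  ring
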